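/- For each integer k ≥ 2 there exist R ∈ (0,∞), a Lebesgue-measurable Schur²-convex set A ⊆ ℝ^k, and points x₀, x₁ ∈ ℝ^k with x₁² ⪯ x₀², such that if X is a random vector uniformly distributed in the closed Euclidean ball {x ∈ ℝ^k : ‖x‖ ≤ R}, then ℙ(X ∈ A + x₁) < ℙ(X ∈ A + x₀); in particular, the function x ↦ ℙ(X ∈ A + x) is not Schur²-concave. -/

import Mathlib

open MeasureTheory ProbabilityTheory Filter
open scoped ENNReal

noncomputable section

/-- The standard Gaussian measure on `ℝ^k` (the `k`-fold product of `N(0,1)`). -/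
def stdGaussianPi (k : ℕ) : MeasureTheory.Measure (Fin k → ℝ) :=
  MeasureTheory.Measure.pi fun _ => ProbabilityTheory.gaussianReal 0 1

/-- `a` majorizes `b`: the total sums agree and, for every `j`, the sum of the `j`
largest entries of `a` is at least the sum of the `j` largest entries of `b`
(formulated equivalently: every sum of entries of `b` over an index set is dominated by
a sum of entries of `a` over an index set of the same cardinality). -/
def Majorizes {k : ℕ} (a b : Fin k → ℝ) : Prop :=
  (∑ i, a i = ∑ i, b i) ∧
  ∀ s : Finset (Fin k), ∃ t : Finset (Fin k),
    t.card = s.card ∧ ∑ i ∈ s, b i ≤ ∑ i ∈ t, a i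

/-- The coordinatewise square `x² = (x₁², …, x_k²)` of a vector. -/
def sqv {k : ℕ} (x : Fin k → ℝ) : Fin k → ℝ := fun i => (x i) ^ 2

/-- `f` is Schur²-concave: `f x ≤ f y` whenever `x²` majorizes `y²`. -/
def Schur2Concave {k : ℕ} {α : Type*} [Preorder α] (f : (Fin k → ℝ) → α) : Prop :=
  ∀ x y : Fin k → ℝ, Majorizes (sqv x) (sqv y) → f x ≤ f y

/-- `f` is Schur²-convex: `f x ≥ f y` whenever `x²` majorizes `y²`. -/
def Schur2Convex {k : ℕ} {α : Type*} [Preorder α] (f : (Fin k → ℝ) → α) : Prop :=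
  ∀ x y : Fin k → ℝ, Majorizes (sqv x) (sqv y) → f y ≤ f x

/-- A set `A` is Schur²-convex if `x ∈ A` and `y² ⪯ x²` imply `y ∈ A`. -/
def Schur2ConvexSet {k : ℕ} (A : Set (Fin k → ℝ)) : Prop :=
  ∀ x y : Fin k → ℝ, x ∈ A → Majorizes (sqv x) (sqv y) → y ∈ A

/-- A set `A` is Schur²-concave if `x ∈ A` and `y² ⪰ x²` imply `y ∈ A`. -/
def Schur2ConcaveSet {k : ℕ} (A : Set (Fin k → ℝ)) : Prop :=
  ∀ x y : Fin k → ℝ, x ∈ A → Majorizes (sqv y) (sqv x) → y ∈ A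

set_option maxHeartbeats 2000000 in
/-- Counterexample: for each `k ≥ 2` there are `R > 0`, a measurable Schur²-convex set
`A ⊆ ℝ^k`, and points `x₀, x₁` with `x₁² ⪯ x₀²` such that for `X` uniformly distributed
in the closed Euclidean ball of radius `R`, `ℙ(X ∈ A + x₁) < ℙ(X ∈ A + x₀)`;
in particular `x ↦ ℙ(X ∈ A + x)` is not Schur²-concave. -/
theorem not_schur2Concave_uniform_ball (k : ℕ) (hk : 2 ≤ k) :
    ∃ R : ℝ, 0 < R ∧
    ∃ A : Set (Fin k → ℝ), MeasurableSet A ∧ Schur2ConvexSet A ∧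
    ∃ x₀ x₁ : Fin k → ℝ, Majorizes (sqv x₀) (sqv x₁) ∧
      ∀ μ : MeasureTheory.Measure (Fin k → ℝ),
        μ = (volume {x : Fin k → ℝ | ∑ i, (x i) ^ 2 ≤ R ^ 2})⁻¹ •
              (volume : MeasureTheory.Measure (Fin k → ℝ)).restrict
                {x : Fin k → ℝ | ∑ i, (x i) ^ 2 ≤ R ^ 2} →
        μ ((· + x₁) '' A) < μ ((· + x₀) '' A) ∧
        ¬ Schur2Concave (fun x : Fin k → ℝ => μ ((· + x) '' A)) := by
  have hk0 : 0 < k := by omega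
  have hkR : (2:ℝ) ≤ (k:ℝ) := by exact_mod_cast hk
  set c : ℝ := 15 * k with hc
  have hc0 : 0 < c := by positivity
  set s2 : ℝ := Real.sqrt 2 with hs2
  have hs2sq : s2 ^ 2 = 2 := Real.sq_sqrt (by norm_num)
  have hs2pos : 0 < s2 := Real.sqrt_pos.2 (by norm_num)
  have hs2lb : 1.414 ≤ s2 := by nlinarith [hs2sq, hs2pos]
  set i0 : Fin k := ⟨0, by omega⟩ with hi0
  set i1 : Fin k := ⟨1, by omega⟩ with hi1
  have hi01 : i0 ≠ i1 := by simp [hi0, hi1, Fin.ext_iff]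
  set R : ℝ := Real.sqrt (c^2 + 4*c + 4*k) with hR
  have hRpos : 0 < R := Real.sqrt_pos.2 (by positivity)
  have hR2 : R^2 = c^2 + 4*c + 4*k := Real.sq_sqrt (by positivity)
  set A : Set (Fin k → ℝ) := Set.univ.pi (fun _ => {t : ℝ | 1 ≤ t^2 ∧ t^2 ≤ 4}) with hA
  set C : Set (Fin k → ℝ) :=
    Set.univ.pi (fun i => if i = i0 ∨ i = i1 then Set.Icc (3/2:ℝ) 2 else Set.Icc 1 2) with hCdef
  set x₀ : Fin k → ℝ := fun i => if i = i0 then c else 0 with hx₀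
  set x₁ : Fin k → ℝ := fun i => if i = i0 ∨ i = i1 then c / s2 else 0 with hx₁
  -- sqv formulas
  have hsq0 : ∀ i, sqv x₀ i = if i = i0 then c^2 else 0 := by
    intro i; simp only [sqv, hx₀]; split_ifs <;> simp
  have hsq1 : ∀ i, sqv x₁ i = if i = i0 ∨ i = i1 then c^2/2 else 0 := by
    intro i; simp only [sqv, hx₁]; split_ifs with h
    · rw [div_pow, hs2sq]
    · simp
  have hsum0 : ∑ i, sqv x₀ i = c^2 := by
    simp only [hsq0]
    rw [Finset.sum_ite_eq' Finset.univ i0 (fun _ => c^2)]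
    simp
  have hpairmem : ∀ i : Fin k, (i = i0 ∨ i = i1) ↔ i ∈ ({i0, i1} : Finset (Fin k)) := by
    intro i; simp
  have hsum1 : ∑ i, sqv x₁ i = c^2 := by
    simp only [hsq1]
    calc ∑ i, (if i = i0 ∨ i = i1 then c^2/2 else 0)
        = ∑ i, (if i ∈ ({i0, i1} : Finset (Fin k)) then c^2/2 else 0) := by
          refine Finset.sum_congr rfl fun i _ => by simp only [Finset.mem_insert, Finset.mem_singleton]
      _ = ∑ _i ∈ ({i0, i1} : Finset (Fin k)), c^2/2 := by
          rw [Finset.sum_ite_mem, Finset.univ_inter]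
      _ = c^2 := by rw [Finset.sum_pair hi01]; ring
  -- Majorizes (sqv x₀) (sqv x₁)
  have hmaj : Majorizes (sqv x₀) (sqv x₁) := by
    constructor
    · rw [hsum0, hsum1]
    · intro s
      have hbnd : ∑ i ∈ s, sqv x₁ i ≤ c^2 := by
        rw [← hsum1]
        exact Finset.sum_le_sum_of_subset_of_nonneg (Finset.subset_univ s)
          (fun i _ _ => by rw [hsq1]; split_ifs <;> positivity)
      by_cases hs : s.Nonempty
      · by_cases h0s : i0 ∈ s
        · refine ⟨s, rfl, ?_⟩
          calc ∑ i ∈ s, sqv x₁ i ≤ c^2 := hbnd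
            _ = ∑ i ∈ s, sqv x₀ i := by
                simp only [hsq0]
                rw [Finset.sum_ite_eq' s i0 (fun _ => c^2)]
                simp [h0s]
        · obtain ⟨j, hj⟩ := hs
          refine ⟨insert i0 (s.erase j), ?_, ?_⟩
          · rw [Finset.card_insert_of_notMem (fun h => h0s (Finset.mem_of_mem_erase h)),
              Finset.card_erase_of_mem hj]
            have : 1 ≤ s.card := Finset.card_pos.2 ⟨j, hj⟩
            omega
          · calc ∑ i ∈ s, sqv x₁ i ≤ c^2 := hbnd
              _ = ∑ i ∈ insert i0 (s.erase j), sqv x₀ i := by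
                  simp only [hsq0]
                  rw [Finset.sum_ite_eq' _ i0 (fun _ => c^2)]
                  simp
      · rw [Finset.not_nonempty_iff_eq_empty.1 hs]
        exact ⟨∅, rfl, le_refl _⟩
  -- A is Schur²-convex
  have hAmem : ∀ a, a ∈ A ↔ ∀ i, 1 ≤ (a i)^2 ∧ (a i)^2 ≤ 4 := by
    intro a; rw [hA, Set.mem_univ_pi]; rfl
  have hAconv : Schur2ConvexSet A := by
    intro x y hx hmajxy
    rw [hAmem] at hx ⊢
    intro i
    constructor
    · -- lower bound via complement
      obtain ⟨t, htc, hle⟩ := hmajxy.2 (Finset.univ.erase i)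
      have htcard : t.card = k - 1 := by
        rw [htc, Finset.card_erase_of_mem (Finset.mem_univ i)]
        simp
      have hcc : tᶜ.card = 1 := by
        rw [Finset.card_compl, htcard]
        simp only [Fintype.card_fin]
        omega
      obtain ⟨j, hj⟩ := Finset.card_eq_one.1 hcc
      have h1 : ∑ i' ∈ tᶜ, sqv x i' + ∑ i' ∈ t, sqv x i' = ∑ i', sqv x i' :=
        Finset.sum_compl_add_sum t _
      have h2 : ∑ i' ∈ Finset.univ.erase i, sqv y i' + sqv y i = ∑ i', sqv y i' :=
        Finset.sum_erase_add _ _ (Finset.mem_univ i)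
      have h3 : ∑ i' ∈ tᶜ, sqv x i' = sqv x j := by rw [hj, Finset.sum_singleton]
      have h4 : (1:ℝ) ≤ sqv x j := (hx j).1
      have h5 : ∑ i', sqv x i' = ∑ i', sqv y i' := hmajxy.1
      have : sqv y i ≥ 1 := by
        simp only [sqv] at *
        nlinarith [hle]
      exact this
    · obtain ⟨t, htc, hle⟩ := hmajxy.2 {i}
      rw [Finset.card_singleton] at htc
      obtain ⟨j, hj⟩ := Finset.card_eq_one.1 htc
      rw [hj, Finset.sum_singleton, Finset.sum_singleton] at hle
      have := (hx j).2
      simp only [sqv] at hle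
      linarith
  -- key expansion
  have key : ∀ x a : Fin k → ℝ,
      ∑ i, (a i + x i)^2 = ∑ i, (a i)^2 + (2 * ∑ i, a i * x i + ∑ i, (x i)^2) := by
    intro x a
    rw [Finset.mul_sum, ← Finset.sum_add_distrib, ← Finset.sum_add_distrib]
    exact Finset.sum_congr rfl fun i _ => by ring
  have hdot0 : ∀ a : Fin k → ℝ, ∑ i, a i * x₀ i = a i0 * c := by
    intro a
    simp only [hx₀, mul_ite, mul_zero]
    rw [Finset.sum_ite_eq' Finset.univ i0 (fun i => a i * c)]
    simp
  have hdot1 : ∀ a : Fin k → ℝ, ∑ i, a i * x₁ i = (a i0 + a i1) * (c / s2) := by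
    intro a
    simp only [hx₁, mul_ite, mul_zero]
    calc ∑ i, (if i = i0 ∨ i = i1 then a i * (c/s2) else 0)
        = ∑ i, (if i ∈ ({i0, i1} : Finset (Fin k)) then a i * (c/s2) else 0) := by
          refine Finset.sum_congr rfl fun i _ => by simp only [Finset.mem_insert, Finset.mem_singleton]
      _ = ∑ i ∈ ({i0, i1} : Finset (Fin k)), a i * (c/s2) := by
          rw [Finset.sum_ite_mem, Finset.univ_inter]
      _ = (a i0 + a i1) * (c / s2) := by rw [Finset.sum_pair hi01]; ring
  have hnormsq0 : ∑ i, (x₀ i)^2 = c^2 := by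
    have := hsum0; simpa [sqv] using this
  have hnormsq1 : ∑ i, (x₁ i)^2 = c^2 := by
    have := hsum1
    simp only [sqv] at this
    simpa using this
  set B : Set (Fin k → ℝ) := {x : Fin k → ℝ | ∑ i, (x i) ^ 2 ≤ R ^ 2} with hB
  -- A + x₀ ⊆ B
  have hA0B : ∀ a ∈ A, a + x₀ ∈ B := by
    intro a ha
    rw [hAmem] at ha
    have hsumA : ∑ i, (a i)^2 ≤ 4 * k := by
      calc ∑ i, (a i)^2 ≤ ∑ _i : Fin k, (4:ℝ) :=
            Finset.sum_le_sum fun i _ => (ha i).2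
        _ = 4 * k := by simp [Finset.sum_const, mul_comm]
      -- may need adjusting
    have hai0 : a i0 ≤ 2 := by nlinarith [(ha i0).2, sq_nonneg (a i0 - 2), sq_nonneg (a i0 + 2)]
    show ∑ i, ((a + x₀) i)^2 ≤ R^2
    simp only [Pi.add_apply]
    rw [key, hdot0, hnormsq0, hR2]
    nlinarith [hsumA, hai0, hc0]
  -- C + x₁ outside B
  have hCmem : ∀ a, a ∈ C ↔ ∀ i,
      a i ∈ (if i = i0 ∨ i = i1 then Set.Icc (3/2:ℝ) 2 else Set.Icc 1 2) := by
    intro a; rw [hCdef, Set.mem_univ_pi]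
  have hCA : C ⊆ A := by
    intro a ha
    rw [hCmem] at ha
    rw [hAmem]
    intro i
    have := ha i
    split_ifs at this with h
    · rw [Set.mem_Icc] at this
      obtain ⟨h1, h2⟩ := this
      constructor <;> nlinarith
    · rw [Set.mem_Icc] at this
      obtain ⟨h1, h2⟩ := this
      constructor <;> nlinarith
  have hC1 : ∀ a ∈ C, a + x₁ ∉ B := by
    intro a ha
    have haA := hCA ha
    rw [hAmem] at haA
    rw [hCmem] at ha
    have h0 : (3/2:ℝ) ≤ a i0 := by
      have := ha i0; simp at this; exact this.1
    have h1 : (3/2:ℝ) ≤ a i1 := by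
      have := ha i1; simp at this; exact this.1
    have hsumA : (k:ℝ) ≤ ∑ i, (a i)^2 := by
      calc (k:ℝ) = ∑ _i : Fin k, (1:ℝ) := by simp
        _ ≤ ∑ i, (a i)^2 := Finset.sum_le_sum fun i _ => (haA i).1
    intro hmem
    rw [hB, Set.mem_setOf_eq] at hmem
    simp only [Pi.add_apply] at hmem
    rw [key, hdot1, hnormsq1, hR2] at hmem
    -- 2 * ((a i0 + a i1) * (c / s2)) = (a i0 + a i1) * c * s2⁻¹*2 ; use s2*s2=2
    have hs2ne : s2 ≠ 0 := ne_of_gt hs2pos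
    have hcd : 2 * (c / s2) = c * s2 := by
      field_simp
      nlinarith [hs2sq]
    have hexp : 2 * ((a i0 + a i1) * (c / s2)) = (a i0 + a i1) * (c * s2) := by
      rw [← hcd]; ring
    rw [hexp] at hmem
    have hlb : 3 * (c * 1.414) ≤ (a i0 + a i1) * (c * s2) := by
      have hcs : c * 1.414 ≤ c * s2 := by nlinarith
      nlinarith [hc0, hs2pos]
    nlinarith [hmem, hsumA, hlb, hc0, hkR]
  -- measurability
  have hsummeas : Measurable fun x : Fin k → ℝ => ∑ i, (x i)^2 := by
    apply Finset.measurable_sum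
    intro i _
    exact ((measurable_pi_apply i).pow_const 2)
  have hBmeas : MeasurableSet B := measurableSet_le hsummeas measurable_const
  have hAmeas : MeasurableSet A := by
    rw [hA]
    refine MeasurableSet.univ_pi fun i => ?_
    have : {t : ℝ | 1 ≤ t^2 ∧ t^2 ≤ 4} =
        {t : ℝ | 1 ≤ t^2} ∩ {t : ℝ | t^2 ≤ 4} := rfl
    rw [this]
    exact (measurableSet_le measurable_const (measurable_id.pow_const 2)).inter
      (measurableSet_le (measurable_id.pow_const 2) measurable_const)
  have hCmeas : MeasurableSet C := by
    rw [hCdef]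
    refine MeasurableSet.univ_pi fun i => ?_
    split_ifs <;> exact measurableSet_Icc
  -- volumes
  have hAfin : volume A < ⊤ := by
    have hsub : A ⊆ Set.univ.pi (fun _ : Fin k => Set.Icc (-2:ℝ) 2) := by
      intro a ha
      rw [hAmem] at ha
      rw [Set.mem_univ_pi]
      intro i
      have := (ha i).2
      constructor <;> nlinarith [sq_nonneg (a i - 2), sq_nonneg (a i + 2)]
    calc volume A ≤ volume (Set.univ.pi (fun _ : Fin k => Set.Icc (-2:ℝ) 2)) :=
          measure_mono hsub
      _ = ∏ _i : Fin k, volume (Set.Icc (-2:ℝ) 2) := volume_pi_pi _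
      _ < ⊤ := ENNReal.prod_lt_top fun _ _ => by
            rw [Real.volume_Icc]; exact ENNReal.ofReal_lt_top
  have hCpos : 0 < volume C := by
    rw [hCdef, volume_pi_pi]
    refine CanonicallyOrderedAdd.prod_pos.2 fun i _ => ?_
    split_ifs <;> rw [Real.volume_Icc] <;> refine ENNReal.ofReal_pos.2 (by norm_num)
  have hCfin : volume C ≠ ⊤ := (lt_of_le_of_lt (measure_mono hCA) hAfin).ne
  have hApos : volume A ≠ 0 := by
    intro h
    exact absurd (le_trans (le_of_eq rfl) (measure_mono hCA)) (by rw [h]; exact not_le.2 hCpos)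
  have hvolBfin : volume B ≠ ⊤ := by
    have hsub : B ⊆ Set.univ.pi (fun _ : Fin k => Set.Icc (-R) R) := by
      intro x hx
      rw [hB, Set.mem_setOf_eq] at hx
      rw [Set.mem_univ_pi]
      intro i
      have hsle : (x i)^2 ≤ R^2 :=
        le_trans (Finset.single_le_sum (fun j _ => sq_nonneg (x j)) (Finset.mem_univ i)) hx
      constructor <;> nlinarith [hRpos]
    refine (lt_of_le_of_lt (measure_mono hsub) ?_).ne
    rw [volume_pi_pi]
    exact ENNReal.prod_lt_top fun _ _ => by
      rw [Real.volume_Icc]; exact ENNReal.ofReal_lt_top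
  have hvolBpos : volume B ≠ 0 := by
    have hsub : Set.univ.pi (fun _ : Fin k => Set.Icc 0 (R / k)) ⊆ B := by
      intro x hx
      rw [Set.mem_univ_pi] at hx
      rw [hB, Set.mem_setOf_eq]
      have hk' : (0:ℝ) < k := by positivity
      have hRk : 0 ≤ R / k := le_of_lt (div_pos hRpos hk')
      have hstep : ∀ i, (x i)^2 ≤ (R/k)^2 := by
        intro i
        have := hx i
        nlinarith [this.1, this.2]
      calc ∑ i, (x i)^2 ≤ ∑ _i : Fin k, (R/k)^2 :=
            Finset.sum_le_sum fun i _ => hstep i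
        _ = k * (R/k)^2 := by simp [Finset.sum_const, mul_comm]
        _ ≤ R^2 := by
            rw [div_pow]
            have h2 : (k:ℝ) * (R^2 / (k:ℝ)^2) = R^2 / (k:ℝ) := by
              field_simp
            rw [h2]
            exact div_le_self (sq_nonneg R) (by linarith)
    intro h
    have : volume (Set.univ.pi (fun _ : Fin k => Set.Icc 0 (R / (k:ℝ)))) = 0 :=
      le_antisymm (h ▸ measure_mono hsub) zero_le
    rw [volume_pi_pi] at this
    have hpos : 0 < ∏ _i : Fin k, volume (Set.Icc (0:ℝ) (R / (k:ℝ))) := by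
      refine CanonicallyOrderedAdd.prod_pos.2 fun i _ => ?_
      rw [Real.volume_Icc]
      refine ENNReal.ofReal_pos.2 ?_
      have : (0:ℝ) < R / (k:ℝ) := div_pos hRpos (by exact_mod_cast hk0)
      linarith
    exact absurd this (ne_of_gt hpos)
  -- translation invariance
  have htrans : ∀ (x : Fin k → ℝ) (S : Set (Fin k → ℝ)),
      (volume : Measure (Fin k → ℝ)) ((· + x) '' S) = volume S := by
    intro x S
    have h : (· + x) '' S = (· + (-x)) ⁻¹' S := by
      ext y
      simp only [Set.mem_image, Set.mem_preimage]
      constructor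
      · rintro ⟨a, haa, rfl⟩; simpa using haa
      · intro hh; exact ⟨y + (-x), hh, by simp⟩
    rw [h, measure_preimage_add_right]
  -- finish
  refine ⟨R, hRpos, A, hAmeas, hAconv, x₀, x₁, hmaj, ?_⟩
  intro μ hμ
  have hμ' : μ = (volume B)⁻¹ • (volume : Measure (Fin k → ℝ)).restrict B := hμ
  have happ : ∀ S : Set (Fin k → ℝ), μ S = (volume B)⁻¹ * volume (S ∩ B) := by
    intro S
    rw [hμ', Measure.smul_apply, smul_eq_mul, Measure.restrict_apply' hBmeas]
  have h0img : ((· + x₀) '' A) ∩ B = (· + x₀) '' A := by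
    refine Set.inter_eq_left.2 ?_
    rintro z ⟨a, haa, rfl⟩
    exact hA0B a haa
  have hval0 : μ ((· + x₀) '' A) = (volume B)⁻¹ * volume A := by
    rw [happ, h0img, htrans]
  have h1sub : ((· + x₁) '' A) ∩ B ⊆ (· + x₁) '' (A \ C) := by
    rintro z ⟨⟨a, haa, rfl⟩, hzB⟩
    exact ⟨a, ⟨haa, fun hC => hC1 a hC hzB⟩, rfl⟩
  have hval1 : μ ((· + x₁) '' A) ≤ (volume B)⁻¹ * (volume A - volume C) := by
    rw [happ]
    refine mul_le_mul_of_nonneg_left ?_ zero_le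
    calc volume (((· + x₁) '' A) ∩ B) ≤ volume ((· + x₁) '' (A \ C)) :=
          measure_mono h1sub
      _ = volume (A \ C) := htrans _ _
      _ = volume A - volume C := measure_diff hCA hCmeas.nullMeasurableSet hCfin
  have hstrict : (volume B)⁻¹ * (volume A - volume C) < (volume B)⁻¹ * volume A := by
    refine ENNReal.mul_lt_mul_right (ENNReal.inv_ne_zero.2 hvolBfin) (ENNReal.inv_ne_top.2 hvolBpos) ?_
    exact ENNReal.sub_lt_self hAfin.ne hApos (ne_of_gt hCpos)
  have hlt : μ ((· + x₁) '' A) < μ ((· + x₀) '' A) := by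
    rw [hval0]
    exact lt_of_le_of_lt hval1 hstrict
  exact ⟨hlt, fun h => absurd (h x₀ x₁ hmaj) (not_le.2 hlt)⟩
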